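/- For p ∈ (1,∞) and q ∈ [0,1], the function x ↦ |cn_p(x,q)|^{p-2} cn_p(x,q) is of class C² on ℝ, with first derivative equal to -(2 - 2/p) sin(am_{1,p}(x,q)) √(1 - q² sin²(am_{1,p}(x,q))). -/

import Mathlib

open Real MeasureTheory Set intervalIntegral Filter

noncomputable section

/-- Incomplete p-elliptic integral of the first kind, type 1. -/
def F1 (p q x : ℝ) : ℝ :=
  ∫ θ in (0:ℝ)..x, |Real.cos θ| ^ (1 - 2/p) / Real.sqrt (1 - q^2 * Real.sin θ ^ 2)

/-- Complete p-elliptic integral of the first kind, type 1. -/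
def K1 (p q : ℝ) : ℝ := F1 p q (π/2)

/-- Incomplete p-elliptic integral of the second kind, type 1. -/
def E1 (p q x : ℝ) : ℝ :=
  ∫ θ in (0:ℝ)..x, Real.sqrt (1 - q^2 * Real.sin θ ^ 2) * |Real.cos θ| ^ (1 - 2/p)

/-- Complete p-elliptic integral of the second kind, type 1. -/
def E1c (p q : ℝ) : ℝ := E1 p q (π/2)

/-- Incomplete p-elliptic integral of the first kind, type 2. -/
def F2 (p q x : ℝ) : ℝ :=
  ∫ θ in (0:ℝ)..x, (1 - q^2 * Real.sin θ ^ 2) ^ (-(1/p))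

/-- Complete p-elliptic integral of the first kind, type 2. -/
def K2 (p q : ℝ) : ℝ := F2 p q (π/2)

open Classical in
/-- Domain of the amplitude parametrization: restricted to `(-π/2, π/2)` when `q = 1` and `p ≤ 2`. -/
def amDom (p q : ℝ) : Set ℝ := if q = 1 ∧ p ≤ 2 then Ioo (-(π/2)) (π/2) else univ

/-- `g` is the inverse of `f`, with `f` regarded as a bijection from `S` onto `ℝ`. -/
def IsInverseOn (f g : ℝ → ℝ) (S : Set ℝ) : Prop :=
  (∀ y ∈ S, g (f y) = y) ∧ ∀ x : ℝ, g x ∈ S ∧ f (g x) = x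

/-- `x ↦ |cn_p(x,q)|^{p-2} cn_p(x,q)` is of class `C²` on `ℝ`, with first derivative
`-(2-2/p) sin(am_{1,p} x) √(1 - q² sin²(am_{1,p} x))`. -/
-- continuity of signed power
lemma sgnPow_cont {c : ℝ} (hc : -1 < c) : Continuous (fun t : ℝ => |t| ^ c * t) := by
  rw [continuous_iff_continuousAt]
  intro u
  rcases eq_or_ne u 0 with rfl | hu
  · have h0 : |(0:ℝ)| ^ c * (0:ℝ) = 0 := by ring
    rw [ContinuousAt, h0]
    have hb : ∀ t : ℝ, ‖|t| ^ c * t‖ ≤ |t| ^ (c+1) := by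
      intro t
      rcases eq_or_ne t 0 with rfl | ht
      · simp [Real.zero_rpow (by linarith : c + 1 ≠ 0)]
      · rw [Real.norm_eq_abs, abs_mul, abs_of_nonneg (Real.rpow_nonneg (abs_nonneg t) c),
          Real.rpow_add_one (abs_ne_zero.2 ht) c]
    have hg : Tendsto (fun t : ℝ => |t| ^ (c+1)) (nhds 0) (nhds 0) := by
      have h := (continuous_abs.continuousAt (x := (0:ℝ))).rpow_const (Or.inr (by linarith : (0:ℝ) ≤ c + 1))
      unfold ContinuousAt at h
      simp only [abs_zero, Real.zero_rpow (show c + 1 ≠ 0 by linarith)] at h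
      exact h
    exact squeeze_zero_norm hb hg
  · exact ((continuous_abs.continuousAt.rpow_const (Or.inl (abs_ne_zero.2 hu))).mul
      continuousAt_id)

lemma sgnPow_hasDerivAt {c u : ℝ} (hu : u ≠ 0) :
    HasDerivAt (fun t : ℝ => |t| ^ c * t) ((c+1) * |u| ^ c) u := by
  rcases hu.lt_or_gt with hneg | hpos
  · have hev : ∀ᶠ t in nhds u, (-t) ^ c * t = |t| ^ c * t := by
      filter_upwards [eventually_lt_nhds hneg] with t ht
      rw [abs_of_neg ht]
    have h1 : HasDerivAt (fun t : ℝ => (-t) ^ c) (-1 * c * (-u) ^ (c-1)) u :=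
      (hasDerivAt_neg u).rpow_const (Or.inl (by simpa using hu))
    have h2 := h1.mul (hasDerivAt_id u)
    have h4 := h2.congr_of_eventuallyEq (hev.mono fun t ht => ht.symm)
    have h3 : (-u) ^ (c-1) * (-u) = (-u) ^ c := by
      rw [← Real.rpow_add_one (by simpa using hu) (c-1)]; ring_nf
    rw [abs_of_neg hneg]
    refine h4.congr_deriv ?_
    symm
    simp only [id_eq]
    linear_combination (-c) * h3
  · have hev : ∀ᶠ t in nhds u, t ^ c * t = |t| ^ c * t := by
      filter_upwards [eventually_gt_nhds hpos] with t ht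
      rw [abs_of_pos ht]
    have h1 : HasDerivAt (fun t : ℝ => t ^ c) (c * u ^ (c-1)) u :=
      Real.hasDerivAt_rpow_const (Or.inl hu)
    have h2 := h1.mul (hasDerivAt_id u)
    have h4 := h2.congr_of_eventuallyEq (hev.mono fun t ht => ht.symm)
    have h3 : u ^ (c-1) * u = u ^ c := by
      rw [← Real.rpow_add_one hu (c-1)]; ring_nf
    rw [abs_of_pos hpos]
    refine h4.congr_deriv ?_
    symm
    simp only [id_eq]
    linear_combination (-c) * h3

lemma cos_isolated (θ₀ : ℝ) : ∃ δ > 0, ∀ θ ∈ Metric.ball θ₀ δ, Real.cos θ = 0 → θ = θ₀ := by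
  rcases eq_or_ne (Real.cos θ₀) 0 with h0 | h0
  · refine ⟨π, Real.pi_pos, fun θ hθ hcos => ?_⟩
    rw [Real.cos_eq_zero_iff] at h0 hcos
    obtain ⟨k, rfl⟩ := h0
    obtain ⟨m, rfl⟩ := hcos
    rw [Metric.mem_ball, Real.dist_eq] at hθ
    have : (2*(m:ℝ)+1) * π / 2 - (2*(k:ℝ)+1) * π / 2 = (m - k : ℤ) * π := by
      push_cast; ring
    rw [this, abs_mul, abs_of_pos Real.pi_pos] at hθ
    have : |((m - k : ℤ) : ℝ)| < 1 := by
      by_contra hcon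
      push_neg at hcon
      nlinarith [Real.pi_pos]
    have hmk : m - k = 0 := by
      rwa [← Int.cast_abs, ← Int.cast_one, Int.cast_lt, Int.abs_lt_one_iff] at this
    have : m = k := by omega
    rw [this]
  · have : ContinuousAt Real.cos θ₀ := Real.continuous_cos.continuousAt
    rcases Metric.continuousAt_iff.1 this (|Real.cos θ₀|) (abs_pos.2 h0) with ⟨δ, hδ, hball⟩
    refine ⟨δ, hδ, fun θ hθ hcos => ?_⟩
    exfalso
    have h2 := hball (Metric.mem_ball.1 hθ)
    rw [hcos, Real.dist_eq, zero_sub, abs_neg] at h2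
    exact absurd h2 (lt_irrefl _)

lemma Dpos {q θ : ℝ} (hq1 : q ≤ 1) (hq0 : 0 ≤ q) (hcos : Real.cos θ ≠ 0) :
    0 < 1 - q^2 * Real.sin θ ^ 2 := by
  have h1 : q^2 ≤ 1 := by nlinarith
  have h2 : q^2 * Real.sin θ^2 ≤ Real.sin θ^2 := by nlinarith [sq_nonneg (Real.sin θ)]
  have h3 : Real.sin θ^2 + Real.cos θ^2 = 1 := Real.sin_sq_add_cos_sq θ
  have h4 : 0 < Real.cos θ^2 := by positivity
  linarith

lemma phi_hasDerivAt {p q θ : ℝ} (hp : 1 < p) (hq1 : q ≤ 1) (hq0 : 0 ≤ q)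
    (hcos : Real.cos θ ≠ 0) :
    HasDerivAt (fun θ' => |Real.cos θ'| ^ (1-2/p) * Real.cos θ')
      ((-(2-2/p) * Real.sin θ * Real.sqrt (1 - q^2 * Real.sin θ ^ 2)) *
        (|Real.cos θ| ^ (1-2/p) / Real.sqrt (1 - q^2 * Real.sin θ ^ 2))) θ := by
  have hD := Dpos hq1 hq0 hcos
  have hs : Real.sqrt (1 - q^2 * Real.sin θ ^ 2) ≠ 0 := (Real.sqrt_pos.2 hD).ne'
  have h1 := (sgnPow_hasDerivAt (c := 1-2/p) hcos).comp θ (Real.hasDerivAt_cos θ)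
  refine h1.congr_deriv ?_
  symm
  rw [div_eq_mul_inv (|Real.cos θ| ^ (1-2/p))]
  linear_combination (-(2-2/p) * Real.sin θ * |Real.cos θ| ^ (1-2/p)) * mul_inv_cancel₀ hs

lemma psi_hasDerivAt {p q θ : ℝ} (hp : 1 < p) (hq1 : q ≤ 1) (hq0 : 0 ≤ q)
    (hcos : Real.cos θ ≠ 0) :
    HasDerivAt (fun θ' => -(2-2/p) * Real.sin θ' * Real.sqrt (1 - q^2 * Real.sin θ' ^ 2))
      ((-(2-2/p) * (1 - 2*q^2*Real.sin θ ^ 2) * (|Real.cos θ| ^ (2/p-1) * Real.cos θ)) *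
        (|Real.cos θ| ^ (1-2/p) / Real.sqrt (1 - q^2 * Real.sin θ ^ 2))) θ := by
  have hD := Dpos hq1 hq0 hcos
  have hsne : Real.sqrt (1 - q^2 * Real.sin θ ^ 2) ≠ 0 := (Real.sqrt_pos.2 hD).ne'
  have hsq : Real.sqrt (1 - q^2 * Real.sin θ ^ 2) * Real.sqrt (1 - q^2 * Real.sin θ ^ 2)
      = 1 - q^2 * Real.sin θ ^ 2 := Real.mul_self_sqrt hD.le
  have habs : |Real.cos θ| ^ (2/p-1) * |Real.cos θ| ^ (1-2/p) = 1 := by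
    rw [← Real.rpow_add (abs_pos.2 hcos)]
    norm_num
  have h1 : HasDerivAt (fun θ' => 1 - q^2 * Real.sin θ' ^ 2)
      (0 - q^2 * ((2:ℕ) * Real.sin θ ^ 1 * Real.cos θ)) θ :=
    (hasDerivAt_const θ (1:ℝ)).sub (((Real.hasDerivAt_sin θ).pow 2).const_mul (q^2))
  have h2 : HasDerivAt (fun θ' => Real.sqrt (1 - q^2 * Real.sin θ' ^ 2))
      (1 / (2 * Real.sqrt (1 - q^2 * Real.sin θ ^ 2)) *
        (0 - q^2 * ((2:ℕ) * Real.sin θ ^ 1 * Real.cos θ))) θ :=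
    (Real.hasDerivAt_sqrt hD.ne').comp θ h1
  have h3 := ((Real.hasDerivAt_sin θ).const_mul (-(2-2/p))).mul h2
  refine h3.congr_deriv ?_
  symm
  have hexp : (-(2-2/p) * (1 - 2*q^2*Real.sin θ ^ 2) * (|Real.cos θ| ^ (2/p-1) * Real.cos θ)) *
      (|Real.cos θ| ^ (1-2/p) / Real.sqrt (1 - q^2 * Real.sin θ ^ 2))
      = -(2-2/p) * (1 - 2*q^2*Real.sin θ ^ 2) * Real.cos θ / Real.sqrt (1 - q^2 * Real.sin θ ^ 2) := by
    rw [show (-(2-2/p) * (1 - 2*q^2*Real.sin θ ^ 2) * (|Real.cos θ| ^ (2/p-1) * Real.cos θ)) *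
        (|Real.cos θ| ^ (1-2/p) / Real.sqrt (1 - q^2 * Real.sin θ ^ 2))
        = (-(2-2/p) * (1 - 2*q^2*Real.sin θ ^ 2) * Real.cos θ / Real.sqrt (1 - q^2 * Real.sin θ ^ 2)) *
          (|Real.cos θ| ^ (2/p-1) * |Real.cos θ| ^ (1-2/p)) from by ring, habs, mul_one]
  rw [hexp]
  have hp0 : p ≠ 0 := by linarith
  field_simp
  linear_combination (2*(p-1)*Real.cos θ) * hsq

open MeasureTheory intervalIntegral in
lemma master (S : Set ℝ) (hSopen : IsOpen S)
    (w F amf Φ ρc : ℝ → ℝ)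
    (hw0 : ∀ θ, 0 ≤ w θ)
    (hint : ∀ u ∈ S, ∀ v ∈ S, IntervalIntegrable w volume u v)
    (hF : ∀ u ∈ S, ∀ v ∈ S, F v - F u = ∫ θ in u..v, w θ)
    (hamS : ∀ x, amf x ∈ S) (hamF : ∀ x, F (amf x) = x)
    (hamc : Continuous amf)
    (hΦc : ContinuousOn Φ S) (hρc : Continuous ρc)
    (hΦd : ∀ θ ∈ S, Real.cos θ ≠ 0 → HasDerivAt Φ (ρc θ * w θ) θ) (x₀ : ℝ) :
    HasDerivAt (fun t => Φ (amf t)) (ρc (amf x₀)) x₀ := by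
  set θ₀ := amf x₀ with hθ₀
  rw [hasDerivAt_iff_isLittleO, Asymptotics.isLittleO_iff]
  intro ε hε
  obtain ⟨δ₁, hδ₁, hδ₁S⟩ := Metric.isOpen_iff.1 hSopen θ₀ (hamS x₀)
  obtain ⟨δ₂, hδ₂, hδ₂cos⟩ := cos_isolated θ₀
  obtain ⟨δ₃, hδ₃, hδ₃ρ⟩ := Metric.continuousAt_iff.1 hρc.continuousAt ε hε
  set δ := min δ₁ (min δ₂ δ₃) with hδdef
  have hδ : 0 < δ := lt_min hδ₁ (lt_min hδ₂ hδ₃)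
  have hballS : Metric.ball θ₀ δ ⊆ S :=
    (Metric.ball_subset_ball (min_le_left _ _)).trans hδ₁S
  have hmem : ∀ᶠ t in nhds x₀, amf t ∈ Metric.ball θ₀ δ :=
    hamc.continuousAt.eventually_mem (Metric.ball_mem_nhds θ₀ hδ)
  filter_upwards [hmem] with t ht
  set θ₁ := amf t with hθ₁
  have hd1 : |θ₁ - θ₀| < δ := by simpa [Real.dist_eq] using ht
  have hIcc : uIcc θ₀ θ₁ ⊆ Metric.ball θ₀ δ := by
    intro ζ hζ
    rw [Set.mem_uIcc] at hζ
    rw [Metric.mem_ball, Real.dist_eq, abs_lt]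
    have := abs_lt.1 hd1
    rcases hζ with ⟨h, h'⟩ | ⟨h, h'⟩ <;> constructor <;> linarith
  have hw_int : IntervalIntegrable w volume θ₀ θ₁ := hint _ (hamS x₀) _ (hamS t)
  have hρw_int : IntervalIntegrable (fun θ => ρc θ * w θ) volume θ₀ θ₁ :=
    hw_int.continuousOn_mul hρc.continuousOn
  have key1 : t - x₀ = ∫ θ in θ₀..θ₁, w θ := by
    rw [← hamF t, ← hamF x₀]
    exact hF θ₀ (hamS x₀) θ₁ (hamS t)
  have key2 : Φ θ₁ - Φ θ₀ = ∫ θ in θ₀..θ₁, ρc θ * w θ := by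
    have hderiv : ∀ θ ∈ Set.Ioo (min θ₀ θ₁) (max θ₀ θ₁), θ ≠ θ₀ →
        HasDerivWithinAt Φ (ρc θ * w θ) (Set.Ioi θ) θ := by
      intro θ hθmem hne
      have hθball : θ ∈ Metric.ball θ₀ δ := hIcc ⟨le_of_lt hθmem.1, le_of_lt hθmem.2⟩
      have hcos : Real.cos θ ≠ 0 := by
        intro h
        exact hne (hδ₂cos θ (Metric.ball_subset_ball ((min_le_right _ _).trans (min_le_left _ _)) hθball) h)
      exact (hΦd θ (hballS hθball) hcos).hasDerivWithinAt
    rcases le_total θ₀ θ₁ with hle | hle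
    · rw [integral_eq_sub_of_hasDeriv_right_of_le hle
        (hΦc.mono ((Set.uIcc_of_le hle ▸ hIcc).trans hballS))
        (fun θ hθmem => hderiv θ (by rwa [min_eq_left hle, max_eq_right hle]) (ne_of_gt hθmem.1))
        hρw_int]
    · rw [integral_symm, integral_eq_sub_of_hasDeriv_right_of_le hle
        (hΦc.mono ((Set.uIcc_of_ge hle ▸ hIcc).trans hballS))
        (fun θ hθmem => hderiv θ (by rwa [min_eq_right hle, max_eq_left hle]) (ne_of_lt hθmem.2))
        hρw_int.symm]
      ring
  have key3 : Φ θ₁ - Φ θ₀ - (t - x₀) * ρc θ₀ = ∫ θ in θ₀..θ₁, (ρc θ - ρc θ₀) * w θ := by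
    have h4 : (∫ θ in θ₀..θ₁, (ρc θ - ρc θ₀) * w θ)
        = (∫ θ in θ₀..θ₁, ρc θ * w θ) - ρc θ₀ * ∫ θ in θ₀..θ₁, w θ := by
      rw [← intervalIntegral.integral_const_mul,
        ← intervalIntegral.integral_sub hρw_int (hw_int.const_mul _)]
      congr 1
      funext θ
      ring
    rw [h4, ← key2, ← key1]
    ring
  have hsub_int : IntervalIntegrable (fun θ => (ρc θ - ρc θ₀) * w θ) volume θ₀ θ₁ :=
    hw_int.continuousOn_mul (hρc.sub continuous_const).continuousOn
  have hptwise : ∀ θ ∈ uIcc θ₀ θ₁, |(ρc θ - ρc θ₀) * w θ| ≤ ε * w θ := by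
    intro θ hθmem
    rw [abs_mul, abs_of_nonneg (hw0 θ)]
    have : dist (ρc θ) (ρc θ₀) < ε := by
      apply hδ₃ρ
      exact Metric.ball_subset_ball ((min_le_right _ _).trans (min_le_right _ _)) (hIcc hθmem)
    rw [Real.dist_eq] at this
    exact mul_le_mul_of_nonneg_right this.le (hw0 θ)
  rw [Real.norm_eq_abs, Real.norm_eq_abs, smul_eq_mul]
  have hmain : |Φ θ₁ - Φ θ₀ - (t - x₀) * ρc θ₀| ≤ ε * |t - x₀| := by
    rw [key3]
    rcases le_total θ₀ θ₁ with hle | hle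
    · have h5 : |∫ θ in θ₀..θ₁, (ρc θ - ρc θ₀) * w θ| ≤ ∫ θ in θ₀..θ₁, |(ρc θ - ρc θ₀) * w θ| :=
        intervalIntegral.abs_integral_le_integral_abs hle
      have h6 : (∫ θ in θ₀..θ₁, |(ρc θ - ρc θ₀) * w θ|) ≤ ∫ θ in θ₀..θ₁, ε * w θ :=
        intervalIntegral.integral_mono_on hle hsub_int.abs (hw_int.const_mul ε)
          (fun θ hθmem => hptwise θ (by rwa [Set.uIcc_of_le hle]))
      have h7 : (∫ θ in θ₀..θ₁, ε * w θ) = ε * (t - x₀) := by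
        rw [intervalIntegral.integral_const_mul, ← key1]
      have h8 : 0 ≤ t - x₀ := by
        rw [key1]; exact intervalIntegral.integral_nonneg hle (fun θ _ => hw0 θ)
      calc |∫ θ in θ₀..θ₁, (ρc θ - ρc θ₀) * w θ| ≤ ε * (t - x₀) := by linarith
        _ = ε * |t - x₀| := by rw [abs_of_nonneg h8]
    · have hswap : |∫ θ in θ₀..θ₁, (ρc θ - ρc θ₀) * w θ|
          = |∫ θ in θ₁..θ₀, (ρc θ - ρc θ₀) * w θ| := by
        rw [intervalIntegral.integral_symm, abs_neg]
      have h5 : |∫ θ in θ₁..θ₀, (ρc θ - ρc θ₀) * w θ| ≤ ∫ θ in θ₁..θ₀, |(ρc θ - ρc θ₀) * w θ| :=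
        intervalIntegral.abs_integral_le_integral_abs hle
      have h6 : (∫ θ in θ₁..θ₀, |(ρc θ - ρc θ₀) * w θ|) ≤ ∫ θ in θ₁..θ₀, ε * w θ :=
        intervalIntegral.integral_mono_on hle hsub_int.symm.abs (hw_int.symm.const_mul ε)
          (fun θ hθmem => hptwise θ (by rwa [Set.uIcc_comm θ₀ θ₁, Set.uIcc_of_le hle]))
      have h7 : (∫ θ in θ₁..θ₀, ε * w θ) = ε * (x₀ - t) := by
        rw [intervalIntegral.integral_const_mul]
        have : (∫ θ in θ₁..θ₀, w θ) = -(t - x₀) := by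
          rw [key1, intervalIntegral.integral_symm]
        rw [this]; ring
      have h8 : 0 ≤ x₀ - t := by
        have : (∫ θ in θ₁..θ₀, w θ) = x₀ - t := by
          rw [intervalIntegral.integral_symm, ← key1]; ring
        rw [← this]
        exact intervalIntegral.integral_nonneg hle (fun θ _ => hw0 θ)
      calc |∫ θ in θ₀..θ₁, (ρc θ - ρc θ₀) * w θ| ≤ ε * (x₀ - t) := by rw [hswap]; linarith
        _ = ε * |t - x₀| := by rw [abs_sub_comm, abs_of_nonneg h8]
  exact hmain

theorem cnp_power_C2 (p q : ℝ) (hp : 1 < p) (hq : q ∈ Set.Icc (0:ℝ) 1)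
    (am : ℝ → ℝ) (ham : IsInverseOn (F1 p q) am (amDom p q))
    (cn : ℝ → ℝ) (hcn : ∀ x, cn x = |Real.cos (am x)| ^ (2/p - 1) * Real.cos (am x)) :
    ContDiff ℝ 2 (fun x => |cn x| ^ (p-2) * cn x) ∧
    ∀ x : ℝ, deriv (fun x => |cn x| ^ (p-2) * cn x) x
      = -(2 - 2/p) * Real.sin (am x) * Real.sqrt (1 - q^2 * Real.sin (am x) ^ 2) := by
  obtain ⟨hq0, hq1⟩ := hq
  set S := amDom p q with hS
  set w : ℝ → ℝ := fun θ => |Real.cos θ| ^ (1 - 2/p) / Real.sqrt (1 - q^2 * Real.sin θ ^ 2)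
    with hw
  have hSopen : IsOpen S := by
    rw [hS, amDom]
    split_ifs
    · exact isOpen_Ioo
    · exact isOpen_univ
  have h0S : (0:ℝ) ∈ S := by
    rw [hS, amDom]
    split_ifs
    · constructor <;> simp [Real.pi_pos] <;> linarith [Real.pi_pos]
    · trivial
  have hw0 : ∀ θ, 0 ≤ w θ := fun θ =>
    div_nonneg (Real.rpow_nonneg (abs_nonneg _) _) (Real.sqrt_nonneg _)
  have hF1w : ∀ x, F1 p q x = ∫ θ in (0:ℝ)..x, w θ := fun x => rfl
  have ham0 : am 0 = 0 := by
    have h1 : F1 p q 0 = 0 := by rw [hF1w, intervalIntegral.integral_same]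
    have := ham.1 0 h0S
    rwa [h1] at this
  have hint0 : ∀ x ∈ S, IntervalIntegrable w volume 0 x := by
    intro x hx
    by_contra h
    have h1 : F1 p q x = 0 := by rw [hF1w]; exact intervalIntegral.integral_undef h
    have h2 : x = 0 := by
      have := ham.1 x hx
      rw [h1, ham0] at this
      exact this.symm
    rw [h2] at h
    exact h IntervalIntegrable.refl
  have hint : ∀ u ∈ S, ∀ v ∈ S, IntervalIntegrable w volume u v :=
    fun u hu v hv => (hint0 u hu).symm.trans (hint0 v hv)
  have hF : ∀ u ∈ S, ∀ v ∈ S, F1 p q v - F1 p q u = ∫ θ in u..v, w θ := by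
    intro u hu v hv
    rw [hF1w, hF1w]
    exact intervalIntegral.integral_interval_sub_left (hint0 v hv) (hint0 u hu)
  have hamS : ∀ x, am x ∈ S := fun x => (ham.2 x).1
  have hamF : ∀ x, F1 p q (am x) = x := fun x => (ham.2 x).2
  have hFmono : ∀ u ∈ S, ∀ v ∈ S, u ≤ v → F1 p q u ≤ F1 p q v := by
    intro u hu v hv huv
    have h1 : 0 ≤ F1 p q v - F1 p q u := by
      rw [hF u hu v hv]
      exact intervalIntegral.integral_nonneg huv (fun θ _ => hw0 θ)
    linarith
  have hammono : StrictMono am := by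
    intro x y hxy
    by_contra h
    push_neg at h
    have := hFmono (am y) (hamS y) (am x) (hamS x) h
    rw [hamF, hamF] at this
    linarith
  have hFstrict : ∀ u ∈ S, ∀ v ∈ S, u < v → F1 p q u < F1 p q v := by
    intro u hu v hv huv
    rcases lt_or_eq_of_le (hFmono u hu v hv huv.le) with h | h
    · exact h
    · exfalso
      have h1 := ham.1 u hu
      have h2 := ham.1 v hv
      rw [h] at h1
      rw [h2] at h1
      exact absurd h1 (ne_of_gt huv)
  have hamc : Continuous am := by
    rw [continuous_iff_continuousAt]
    intro x₀
    rw [Metric.continuousAt_iff]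
    intro ε hε
    set θ₀ := am x₀ with hθ₀
    obtain ⟨r, hr, hrS⟩ := Metric.isOpen_iff.1 hSopen θ₀ (hamS x₀)
    set ε' := min (r/2) (ε/2) with hε'def
    have hε' : 0 < ε' := lt_min (by linarith) (by linarith)
    have hmemP : θ₀ + ε' ∈ S := hrS (by
      rw [Metric.mem_ball, Real.dist_eq]
      have : |θ₀ + ε' - θ₀| = ε' := by rw [show θ₀ + ε' - θ₀ = ε' by ring, abs_of_pos hε']
      rw [this]
      calc ε' ≤ r/2 := min_le_left _ _
        _ < r := by linarith)
    have hmemM : θ₀ - ε' ∈ S := hrS (by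
      rw [Metric.mem_ball, Real.dist_eq]
      have : |θ₀ - ε' - θ₀| = ε' := by rw [show θ₀ - ε' - θ₀ = -ε' by ring, abs_neg, abs_of_pos hε']
      rw [this]
      calc ε' ≤ r/2 := min_le_left _ _
        _ < r := by linarith)
    have hx₀ : F1 p q θ₀ = x₀ := hamF x₀
    have htM : F1 p q (θ₀ - ε') < x₀ := by
      rw [← hx₀]
      exact hFstrict _ hmemM _ (hamS x₀) (by linarith)
    have htP : x₀ < F1 p q (θ₀ + ε') := by
      rw [← hx₀]
      exact hFstrict _ (hamS x₀) _ hmemP (by linarith)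
    refine ⟨min (x₀ - F1 p q (θ₀ - ε')) (F1 p q (θ₀ + ε') - x₀),
      lt_min (by linarith) (by linarith), ?_⟩
    intro t hdist
    rw [Real.dist_eq] at hdist
    have habs := abs_lt.1 hdist
    have hlt1 : F1 p q (θ₀ - ε') < t := by
      have := habs.1
      linarith [min_le_left (x₀ - F1 p q (θ₀ - ε')) (F1 p q (θ₀ + ε') - x₀)]
    have hlt2 : t < F1 p q (θ₀ + ε') := by
      linarith [min_le_right (x₀ - F1 p q (θ₀ - ε')) (F1 p q (θ₀ + ε') - x₀), habs.2]
    have ha1 : θ₀ - ε' < am t := by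
      have := hammono hlt1
      rwa [ham.1 _ hmemM] at this
    have ha2 : am t < θ₀ + ε' := by
      have := hammono hlt2
      rwa [ham.1 _ hmemP] at this
    rw [Real.dist_eq, abs_lt]
    have hε'2 : ε' ≤ ε/2 := min_le_right _ _
    constructor <;> linarith
  have hp0 : (0:ℝ) < p := by linarith
  have hc1 : (-1:ℝ) < 1 - 2/p := by
    have : 2/p < 2 := by rw [div_lt_iff₀ hp0]; nlinarith
    linarith
  have hc2 : (-1:ℝ) < 2/p - 1 := by
    have : 0 < 2/p := by positivity
    linarith
  have hΦcont : Continuous (fun θ => |Real.cos θ| ^ (1-2/p) * Real.cos θ) := by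
    exact (sgnPow_cont hc1).comp Real.continuous_cos
  have hψcont : Continuous (fun θ => -(2-2/p) * Real.sin θ * Real.sqrt (1 - q^2 * Real.sin θ ^ 2)) :=
    (continuous_const.mul Real.continuous_sin).mul
      (Real.continuous_sqrt.comp (continuous_const.sub (continuous_const.mul (Real.continuous_sin.pow 2))))
  have hρcont : Continuous (fun θ => -(2-2/p) * (1 - 2*q^2*Real.sin θ ^ 2) *
      (|Real.cos θ| ^ (2/p-1) * Real.cos θ)) := by
    exact (continuous_const.mul (continuous_const.sub
      (continuous_const.mul (Real.continuous_sin.pow 2)))).mul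
      ((sgnPow_cont hc2).comp Real.continuous_cos)
  have d1 : ∀ x₀ : ℝ, HasDerivAt (fun t => |Real.cos (am t)| ^ (1-2/p) * Real.cos (am t))
      (-(2-2/p) * Real.sin (am x₀) * Real.sqrt (1 - q^2 * Real.sin (am x₀) ^ 2)) x₀ := by
    intro x₀
    exact master S hSopen w (F1 p q) am
      (fun θ => |Real.cos θ| ^ (1-2/p) * Real.cos θ)
      (fun θ => -(2-2/p) * Real.sin θ * Real.sqrt (1 - q^2 * Real.sin θ ^ 2))
      hw0 hint hF hamS hamF hamc hΦcont.continuousOn hψcont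
      (fun θ _ hcos => phi_hasDerivAt hp hq1 hq0 hcos) x₀
  have d2 : ∀ x₀ : ℝ, HasDerivAt
      (fun t => -(2-2/p) * Real.sin (am t) * Real.sqrt (1 - q^2 * Real.sin (am t) ^ 2))
      (-(2-2/p) * (1 - 2*q^2*Real.sin (am x₀) ^ 2) *
        (|Real.cos (am x₀)| ^ (2/p-1) * Real.cos (am x₀))) x₀ := by
    intro x₀
    exact master S hSopen w (F1 p q) am
      (fun θ => -(2-2/p) * Real.sin θ * Real.sqrt (1 - q^2 * Real.sin θ ^ 2))
      (fun θ => -(2-2/p) * (1 - 2*q^2*Real.sin θ ^ 2) * (|Real.cos θ| ^ (2/p-1) * Real.cos θ))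
      hw0 hint hF hamS hamF hamc hψcont.continuousOn hρcont
      (fun θ _ hcos => psi_hasDerivAt hp hq1 hq0 hcos) x₀
  have hgf : (fun x => |cn x| ^ (p-2) * cn x)
      = (fun x => |Real.cos (am x)| ^ (1-2/p) * Real.cos (am x)) := by
    funext x
    rw [hcn x]
    rcases eq_or_ne (Real.cos (am x)) 0 with h | h
    · simp [h]
    · have hpos : 0 < |Real.cos (am x)| := abs_pos.2 h
      have habs1 : |(|Real.cos (am x)| ^ (2/p-1) * Real.cos (am x))|
          = |Real.cos (am x)| ^ (2/p) := by
        rw [abs_mul, abs_of_nonneg (Real.rpow_nonneg (abs_nonneg _) _),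
          ← Real.rpow_add_one (ne_of_gt hpos)]
        norm_num
      rw [habs1, ← Real.rpow_mul (abs_nonneg _), ← mul_assoc, ← Real.rpow_add hpos]
      congr 1
      field_simp
      ring
  rw [hgf]
  have hderiv1 : deriv (fun x => |Real.cos (am x)| ^ (1-2/p) * Real.cos (am x))
      = fun x => -(2-2/p) * Real.sin (am x) * Real.sqrt (1 - q^2 * Real.sin (am x) ^ 2) :=
    funext fun x => (d1 x).deriv
  constructor
  · rw [show (2 : WithTop ℕ∞) = 1 + 1 from by norm_num, contDiff_succ_iff_deriv]
    refine ⟨fun x => (d1 x).differentiableAt, by simp, ?_⟩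
    rw [hderiv1, contDiff_one_iff_deriv]
    refine ⟨fun x => (d2 x).differentiableAt, ?_⟩
    have hderiv2 : deriv (fun x => -(2-2/p) * Real.sin (am x) *
        Real.sqrt (1 - q^2 * Real.sin (am x) ^ 2))
        = fun x => -(2-2/p) * (1 - 2*q^2*Real.sin (am x) ^ 2) *
          (|Real.cos (am x)| ^ (2/p-1) * Real.cos (am x)) :=
      funext fun x => (d2 x).deriv
    rw [hderiv2]
    exact hρcont.comp hamc
  · intro x
    rw [hderiv1]



end
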